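/- Let Π be a probability measure on [0,∞) and let g₁(p) = ∫_{[0,∞)} exp(h·cv₁(p) − h²/2) dΠ(h). Then g₁ is completely monotone on (0, 1/2]: for every integer k ≥ 0 and every p ∈ (0, 1/2], 0 ≤ (−1)^k g₁^{(k)}(p). -/

import Mathlib

open MeasureTheory

/-- The standard normal density φ(x) = (2π)^{-1/2} exp(-x²/2). -/
noncomputable def stdNormalPdf (x : ℝ) : ℝ :=
  (Real.sqrt (2 * Real.pi))⁻¹ * Real.exp (-x ^ 2 / 2)

/-- The standard normal CDF Φ(x) = ∫_{-∞}^x φ(t) dt. -/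
noncomputable def stdNormalCdf (x : ℝ) : ℝ :=
  ∫ t in Set.Iic x, stdNormalPdf t

set_option linter.unusedSectionVars false

/-- Q_k: polynomial in c (outer) with coefficients polynomials in h (inner). -/
noncomputable def QQ : ℕ → Polynomial (Polynomial ℝ)
  | 0 => 1
  | (k+1) => Polynomial.derivative (QQ k) +
      (Polynomial.C (Polynomial.C (k:ℝ)) * Polynomial.X + Polynomial.C Polynomial.X) * QQ k

def NNR (p : Polynomial ℝ) : Prop := ∀ i, 0 ≤ p.coeff i

def NN (q : Polynomial (Polynomial ℝ)) : Prop := ∀ i, NNR (q.coeff i)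

lemma NNR_add {p q : Polynomial ℝ} (hp : NNR p) (hq : NNR q) : NNR (p + q) := by
  intro i; rw [Polynomial.coeff_add]; exact add_nonneg (hp i) (hq i)

lemma NNR_mul {p q : Polynomial ℝ} (hp : NNR p) (hq : NNR q) : NNR (p * q) := by
  intro i; rw [Polynomial.coeff_mul]
  exact Finset.sum_nonneg fun x _ => mul_nonneg (hp x.1) (hq x.2)

lemma NN_add {p q : Polynomial (Polynomial ℝ)} (hp : NN p) (hq : NN q) : NN (p + q) := by
  intro i; rw [Polynomial.coeff_add]; exact NNR_add (hp i) (hq i)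

lemma NNR_sum {s : Finset (ℕ × ℕ)} {f : ℕ × ℕ → Polynomial ℝ} (h : ∀ x ∈ s, NNR (f x)) :
    NNR (∑ x ∈ s, f x) := by
  intro i
  rw [Polynomial.finset_sum_coeff]
  exact Finset.sum_nonneg fun x hx => h x hx i

lemma NN_mul {p q : Polynomial (Polynomial ℝ)} (hp : NN p) (hq : NN q) : NN (p * q) := by
  intro i; rw [Polynomial.coeff_mul]
  exact NNR_sum fun x _ => NNR_mul (hp x.1) (hq x.2)

lemma NNR_zero : NNR (0 : Polynomial ℝ) := fun i => by simp

lemma NNR_one : NNR (1 : Polynomial ℝ) := fun i => by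
  by_cases hi : i = 0 <;> simp [Polynomial.coeff_one, hi]

lemma NNR_C {a : ℝ} (ha : 0 ≤ a) : NNR (Polynomial.C a) := fun i => by
  by_cases hi : i = 0 <;> simp [Polynomial.coeff_C, hi, ha]

lemma NNR_X : NNR (Polynomial.X : Polynomial ℝ) := fun i => by
  rw [Polynomial.coeff_X]; split <;> norm_num

lemma NNR_natCast {n : ℕ} : NNR ((n : Polynomial ℝ)) := by
  have : ((n : Polynomial ℝ)) = Polynomial.C (n : ℝ) := by simp
  rw [this]; exact NNR_C (by positivity)

lemma NN_derivative {p : Polynomial (Polynomial ℝ)} (hp : NN p) : NN (Polynomial.derivative p) := by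
  intro i
  rw [Polynomial.coeff_derivative]
  exact NNR_mul (hp (i+1)) (NNR_add NNR_natCast NNR_one)

lemma NN_one : NN (1 : Polynomial (Polynomial ℝ)) := fun i => by
  by_cases hi : i = 0 <;> simp [Polynomial.coeff_one, hi]
  exacts [NNR_one, NNR_zero]

lemma NN_X : NN (Polynomial.X : Polynomial (Polynomial ℝ)) := fun i => by
  rw [Polynomial.coeff_X]; split
  exacts [NNR_one, NNR_zero]

lemma NN_C {a : Polynomial ℝ} (ha : NNR a) : NN (Polynomial.C a) := fun i => by
  by_cases hi : i = 0 <;> simp [Polynomial.coeff_C, hi]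
  exacts [ha, NNR_zero]

lemma NN_QQ : ∀ k, NN (QQ k) := by
  intro k
  induction k with
  | zero => exact NN_one
  | succ k ih =>
    exact NN_add (NN_derivative ih)
      (NN_mul (NN_add (NN_mul (NN_C (NNR_C (by positivity))) NN_X) (NN_C NNR_X)) ih)

noncomputable def EE (q : Polynomial (Polynomial ℝ)) (c h : ℝ) : ℝ :=
  (q.map (Polynomial.evalRingHom h)).eval c

lemma EE_swap (q : Polynomial (Polynomial ℝ)) (c h : ℝ) :
    EE q c h = (q.eval (Polynomial.C c)).eval h := by
  unfold EE
  rw [Polynomial.eval_map]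
  induction q using Polynomial.induction_on' with
  | add p q hp hq => simp [hp, hq]
  | monomial n a => simp [Polynomial.eval_monomial, mul_comm]

lemma NNR_eval_nonneg {p : Polynomial ℝ} (hp : NNR p) {x : ℝ} (hx : 0 ≤ x) :
    0 ≤ p.eval x := by
  rw [Polynomial.eval_eq_sum_range]
  exact Finset.sum_nonneg fun i _ => mul_nonneg (hp i) (pow_nonneg hx i)

lemma EE_nonneg {q : Polynomial (Polynomial ℝ)} (hq : NN q) {c h : ℝ}
    (hc : 0 ≤ c) (hh : 0 ≤ h) : 0 ≤ EE q c h := by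
  unfold EE
  refine NNR_eval_nonneg (fun i => ?_) hc
  rw [Polynomial.coeff_map]
  exact NNR_eval_nonneg (hq i) hh

lemma EE_abs_le {q : Polynomial (Polynomial ℝ)} (hq : NN q) {c h C : ℝ}
    (hh : 0 ≤ h) (hc : |c| ≤ C) : |EE q c h| ≤ EE q C h := by
  unfold EE
  set r := q.map (Polynomial.evalRingHom h) with hr
  have hrnn : NNR r := fun i => by
    rw [hr, Polynomial.coeff_map]; exact NNR_eval_nonneg (hq i) hh
  rw [Polynomial.eval_eq_sum_range, Polynomial.eval_eq_sum_range]
  refine (Finset.abs_sum_le_sum_abs _ _).trans (Finset.sum_le_sum fun i _ => ?_)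
  rw [abs_mul, abs_of_nonneg (hrnn i), abs_pow]
  exact mul_le_mul_of_nonneg_left (pow_le_pow_left₀ (abs_nonneg c) hc i) (hrnn i)

lemma poly_exp_bound (p : Polynomial ℝ) (A : ℝ) :
    ∃ M : ℝ, ∀ h : ℝ, 0 ≤ h → |p.eval h| * Real.exp (h * A - h ^ 2 / 2) ≤ M := by
  set n := p.natDegree with hn
  set S := ∑ i ∈ Finset.range (n + 1), |p.coeff i| with hS
  have hS0 : 0 ≤ S := Finset.sum_nonneg fun i _ => abs_nonneg _
  refine ⟨S * Real.exp (((n : ℝ) + A) ^ 2 / 2), fun h hh => ?_⟩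
  have h1 : |p.eval h| ≤ S * Real.exp ((n : ℝ) * h) := by
    rw [Polynomial.eval_eq_sum_range]
    refine (Finset.abs_sum_le_sum_abs _ _).trans ?_
    rw [hS, Finset.sum_mul]
    refine Finset.sum_le_sum fun i hi => ?_
    rw [abs_mul, abs_pow, abs_of_nonneg hh]
    refine mul_le_mul_of_nonneg_left ?_ (abs_nonneg _)
    have h2 : h ^ i ≤ (1 + h) ^ i :=
      pow_le_pow_left₀ hh (by linarith) i
    have h3 : (1 + h) ^ i ≤ (1 + h) ^ n :=
      pow_le_pow_right₀ (by linarith) (by have := Finset.mem_range.mp hi; omega : i ≤ n)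
    have h4 : (1 + h) ^ n ≤ Real.exp h ^ n :=
      pow_le_pow_left₀ (by linarith) (by linarith [Real.add_one_le_exp h]) n
    calc h ^ i ≤ (1+h)^n := le_trans h2 h3
      _ ≤ Real.exp h ^ n := h4
      _ = Real.exp ((n:ℝ) * h) := by rw [← Real.exp_nat_mul]
  calc |p.eval h| * Real.exp (h * A - h ^ 2 / 2)
      ≤ S * Real.exp ((n:ℝ) * h) * Real.exp (h * A - h ^ 2 / 2) :=
        mul_le_mul_of_nonneg_right h1 (Real.exp_nonneg _)
    _ = S * Real.exp (h * ((n:ℝ) + A) - h ^ 2 / 2) := by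
        rw [mul_assoc, ← Real.exp_add]; ring_nf
    _ ≤ S * Real.exp (((n : ℝ) + A) ^ 2 / 2) := by
        refine mul_le_mul_of_nonneg_left (Real.exp_le_exp.mpr (by nlinarith [sq_nonneg (h - ((n:ℝ) + A))])) hS0

noncomputable def KK (k : ℕ) (c h : ℝ) : ℝ :=
  (Real.sqrt (2 * Real.pi))^k * (EE (QQ k) c h * Real.exp ((k:ℝ) * c^2/2 + h*c - h^2/2))

lemma KK_zero (c h : ℝ) : KK 0 c h = Real.exp (h*c - h^2/2) := by
  simp [KK, EE, QQ]

lemma EE_succ (k : ℕ) (c h : ℝ) :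
    EE (QQ (k+1)) c h = EE (Polynomial.derivative (QQ k)) c h + ((k:ℝ)*c + h) * EE (QQ k) c h := by
  simp [QQ, EE]

lemma hasDerivAt_KK (k : ℕ) (h c : ℝ) :
    HasDerivAt (fun c => KK k c h) (stdNormalPdf c * KK (k+1) c h) c := by
  have s_pos : 0 < Real.sqrt (2*Real.pi) := Real.sqrt_pos.mpr (by positivity)
  have hf : HasDerivAt (fun c => EE (QQ k) c h) (EE (Polynomial.derivative (QQ k)) c h) c := by
    unfold EE; rw [← Polynomial.derivative_map]; exact Polynomial.hasDerivAt _ c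
  have hu : HasDerivAt (fun c : ℝ => (k:ℝ) * c^2/2 + h*c - h^2/2) ((k:ℝ)*c + h) c := by
    have h1 := (((hasDerivAt_pow 2 c).const_mul ((k:ℝ))).div_const 2)
    have h2 := (hasDerivAt_id c).const_mul h
    refine ((h1.add h2).sub_const (h^2/2)).congr_deriv ?_
    push_cast; ring
  have hE := hu.exp
  have key := (hf.mul hE).const_mul ((Real.sqrt (2*Real.pi))^k)
  have : stdNormalPdf c * KK (k+1) c h =
      (Real.sqrt (2*Real.pi))^k *
        (EE (Polynomial.derivative (QQ k)) c h * Real.exp ((k:ℝ) * c^2/2 + h*c - h^2/2) +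
         EE (QQ k) c h * (Real.exp ((k:ℝ) * c^2/2 + h*c - h^2/2) * ((k:ℝ)*c + h))) := by
    rw [stdNormalPdf, KK, EE_succ]
    have e1 : ((k+1:ℕ):ℝ) * c^2/2 + h*c - h^2/2
        = (c^2/2) + ((k:ℝ) * c^2/2 + h*c - h^2/2) := by push_cast; ring
    rw [neg_div, Real.exp_neg, e1, Real.exp_add, pow_succ (Real.sqrt (2*Real.pi)) k]
    have hne : Real.sqrt (2*Real.pi) ≠ 0 := ne_of_gt s_pos
    have h1 : Real.exp (c^2/2) ≠ 0 := Real.exp_ne_zero _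
    field_simp
  rw [this]
  exact key

lemma stdNormalPdf_pos (x : ℝ) : 0 < stdNormalPdf x := by
  have : 0 < Real.sqrt (2 * Real.pi) := Real.sqrt_pos.mpr (by positivity)
  unfold stdNormalPdf
  positivity

lemma continuous_stdNormalPdf : Continuous stdNormalPdf := by
  unfold stdNormalPdf; fun_prop

lemma integrable_stdNormalPdf : Integrable stdNormalPdf := by
  have h : Integrable (fun x : ℝ => Real.exp (-(2⁻¹:ℝ) * x ^ 2)) :=
    integrable_exp_neg_mul_sq (by norm_num)
  have h2 : (fun x : ℝ => Real.exp (-x ^ 2 / 2)) = fun x : ℝ => Real.exp (-(2⁻¹:ℝ) * x ^ 2) := by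
    funext x; ring_nf
  unfold stdNormalPdf
  simp_rw [mul_comm]
  exact (h2 ▸ h).mul_const _

lemma hasDerivAt_stdNormalCdf (x : ℝ) : HasDerivAt stdNormalCdf (stdNormalPdf x) x := by
  have heq : ∀ y : ℝ, stdNormalCdf y = stdNormalCdf 0 + ∫ t in (0:ℝ)..y, stdNormalPdf t := by
    intro y
    rw [← intervalIntegral.integral_Iic_sub_Iic (integrable_stdNormalPdf.integrableOn)
      (integrable_stdNormalPdf.integrableOn)]
    unfold stdNormalCdf; ring
  have h1 : HasDerivAt (fun y => stdNormalCdf 0 + ∫ t in (0:ℝ)..y, stdNormalPdf t)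
      (stdNormalPdf x) x := by
    refine HasDerivAt.const_add _ ?_
    refine intervalIntegral.integral_hasDerivAt_right
      (integrable_stdNormalPdf.intervalIntegrable)
      (continuous_stdNormalPdf.aestronglyMeasurable.stronglyMeasurableAtFilter)
      (continuous_stdNormalPdf.continuousAt)
  exact h1.congr_of_eventuallyEq (Filter.Eventually.of_forall heq)

lemma strictMono_stdNormalCdf : StrictMono stdNormalCdf :=
  strictMono_of_deriv_pos fun x => by
    rw [(hasDerivAt_stdNormalCdf x).deriv]; exact stdNormalPdf_pos x

lemma integral_stdNormalPdf : ∫ x, stdNormalPdf x = 1 := by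
  unfold stdNormalPdf
  rw [MeasureTheory.integral_const_mul]
  have h2 : (fun x : ℝ => Real.exp (-x ^ 2 / 2)) = fun x : ℝ => Real.exp (-(2⁻¹:ℝ) * x ^ 2) := by
    funext x; ring_nf
  rw [h2, integral_gaussian]
  rw [show (Real.pi / 2⁻¹) = 2 * Real.pi by ring]
  rw [inv_mul_cancel₀ (ne_of_gt (Real.sqrt_pos.mpr (by positivity)))]

lemma stdNormalCdf_zero : stdNormalCdf 0 = 1 / 2 := by
  have hsymm : ∫ t in Set.Ioi (0:ℝ), stdNormalPdf t = stdNormalCdf 0 := by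
    rw [show (Set.Ioi (0:ℝ)) = Set.Ioi (-(0:ℝ)) by norm_num,
      ← integral_comp_neg_Iic]
    unfold stdNormalCdf
    congr 1; funext t; unfold stdNormalPdf; rw [neg_pow]; norm_num
  have hsplit : stdNormalCdf 0 + ∫ t in Set.Ioi (0:ℝ), stdNormalPdf t = 1 := by
    rw [← integral_stdNormalPdf]
    rw [← MeasureTheory.integral_add_compl (measurableSet_Iic (a := (0:ℝ)))
      integrable_stdNormalPdf, Set.compl_Iic]
    rfl
  rw [hsymm] at hsplit
  linarith
open MeasureTheory

section CV
variable (cv : ℝ → ℝ) (hcv : ∀ p ∈ Set.Ioo (0:ℝ) 1, stdNormalCdf (cv p) = 1 - p)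

include hcv

lemma cv_lt (p q : ℝ) (hp : p ∈ Set.Ioo (0:ℝ) 1) (hq : q ∈ Set.Ioo (0:ℝ) 1)
    (hpq : p < q) : cv q < cv p :=
  strictMono_stdNormalCdf.lt_iff_lt.mp (by rw [hcv p hp, hcv q hq]; linarith)

lemma cv_continuousAt {p : ℝ} (hp : p ∈ Set.Ioo (0:ℝ) 1) : ContinuousAt cv p := by
  obtain ⟨hp0, hp1⟩ := hp
  rw [Metric.continuousAt_iff]
  intro ε hε
  set a := stdNormalCdf (cv p - ε) with ha'
  set b := stdNormalCdf (cv p + ε) with hb'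
  have ha : a < 1 - p := by
    rw [← hcv p ⟨hp0, hp1⟩]; exact strictMono_stdNormalCdf (by linarith)
  have hb : 1 - p < b := by
    rw [← hcv p ⟨hp0, hp1⟩]; exact strictMono_stdNormalCdf (by linarith)
  refine ⟨min (min (1 - p - a) (b - (1 - p))) (min p (1 - p)),
    lt_min (lt_min (by linarith) (by linarith)) (lt_min hp0 (by linarith)), ?_⟩
  intro q hq
  rw [Real.dist_eq] at hq ⊢
  have h1 : |q - p| < 1 - p - a := lt_of_lt_of_le hq ((min_le_left _ _).trans (min_le_left _ _))
  have h2 : |q - p| < b - (1 - p) := lt_of_lt_of_le hq ((min_le_left _ _).trans (min_le_right _ _))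
  have h3 : |q - p| < p := lt_of_lt_of_le hq ((min_le_right _ _).trans (min_le_left _ _))
  have h4 : |q - p| < 1 - p := lt_of_lt_of_le hq ((min_le_right _ _).trans (min_le_right _ _))
  rw [abs_lt] at h1 h2 h3 h4
  have hq01 : q ∈ Set.Ioo (0:ℝ) 1 := ⟨by linarith [h3.1], by linarith [h4.2]⟩
  have hΦq : stdNormalCdf (cv q) = 1 - q := hcv q hq01
  have u1 : cv q < cv p + ε := by
    by_contra hcon
    push_neg at hcon
    have := strictMono_stdNormalCdf.monotone hcon
    rw [hΦq] at this
    rw [← hb'] at this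
    linarith [h2.2]
  have u2 : cv p - ε < cv q := by
    by_contra hcon
    push_neg at hcon
    have := strictMono_stdNormalCdf.monotone hcon
    rw [hΦq] at this
    rw [← ha'] at this
    linarith [h1.2]
  rw [abs_lt]
  constructor <;> linarith

lemma cv_hasDerivAt {p : ℝ} (hp : p ∈ Set.Ioo (0:ℝ) 1) :
    HasDerivAt cv (-(stdNormalPdf (cv p))⁻¹) p := by
  obtain ⟨hp0, hp1⟩ := hp
  have hkey : (1:ℝ) - (1 - p) = p := by ring
  have hg : ContinuousAt (fun y : ℝ => cv (1 - y)) (1 - p) := by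
    have hc : ContinuousAt cv (1 - (1 - p)) := by
      rw [hkey]; exact cv_continuousAt cv hcv ⟨hp0, hp1⟩
    exact hc.comp ((continuous_const.sub continuous_id).continuousAt)
  have hfg : ∀ᶠ y in nhds (1 - p), stdNormalCdf ((fun y : ℝ => cv (1 - y)) y) = y := by
    have hmem : Set.Ioo (0:ℝ) 1 ∈ nhds (1 - p) :=
      isOpen_Ioo.mem_nhds ⟨by linarith, by linarith⟩
    filter_upwards [hmem] with y hy
    rw [hcv (1 - y) ⟨by linarith [hy.2], by linarith [hy.1]⟩]; ring
  have hf : HasDerivAt stdNormalCdf (stdNormalPdf (cv p)) ((fun y : ℝ => cv (1 - y)) (1 - p)) := by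
    simp only [hkey]
    exact hasDerivAt_stdNormalCdf _
  have h1 : HasDerivAt (fun y : ℝ => cv (1 - y)) (stdNormalPdf (cv p))⁻¹ (1 - p) :=
    HasDerivAt.of_local_left_inverse hg hf (ne_of_gt (stdNormalPdf_pos _)) hfg
  have h2 : HasDerivAt (fun x : ℝ => (1:ℝ) - x) (-1) p := (hasDerivAt_id p).const_sub 1
  have h3 := h1.comp p h2
  have h4 : ((fun y : ℝ => cv (1 - y)) ∘ (fun x : ℝ => 1 - x)) = cv := by
    funext x; simp [Function.comp, sub_sub_cancel]
  rw [h4] at h3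
  rw [show -(stdNormalPdf (cv p))⁻¹ = (stdNormalPdf (cv p))⁻¹ * -1 by ring]
  exact h3

end CV

lemma KK_nonneg (k : ℕ) {c h : ℝ} (hc : 0 ≤ c) (hh : 0 ≤ h) : 0 ≤ KK k c h :=
  mul_nonneg (pow_nonneg (Real.sqrt_nonneg _) k)
    (mul_nonneg (EE_nonneg (NN_QQ k) hc hh) (Real.exp_nonneg _))

lemma continuous_KK_h (k : ℕ) (c : ℝ) : Continuous (fun h => KK k c h) := by
  unfold KK
  have h1 : Continuous (fun h => EE (QQ k) c h) := by
    have : (fun h => EE (QQ k) c h) = fun h => ((QQ k).eval (Polynomial.C c)).eval h := by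
      funext h; exact EE_swap _ _ _
    rw [this]
    exact Polynomial.continuous _
  fun_prop

lemma KK_bound (k : ℕ) {C : ℝ} (hC : 0 ≤ C) :
    ∃ M : ℝ, ∀ c h : ℝ, |c| ≤ C → 0 ≤ h → |KK k c h| ≤ M := by
  obtain ⟨M, hM⟩ := poly_exp_bound ((QQ k).eval (Polynomial.C C)) C
  set s := Real.sqrt (2 * Real.pi) with hs
  have hs0 : 0 ≤ s := Real.sqrt_nonneg _
  refine ⟨s ^ k * Real.exp ((k:ℝ) * C ^ 2 / 2) * M, fun c h hc hh => ?_⟩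
  have hEc : |EE (QQ k) c h| ≤ EE (QQ k) C h := EE_abs_le (NN_QQ k) hh hc
  have hE0 : 0 ≤ EE (QQ k) C h :=
    EE_nonneg (NN_QQ k) hC hh
  have hswap : EE (QQ k) C h = ((QQ k).eval (Polynomial.C C)).eval h := EE_swap _ _ _
  have hexp : Real.exp ((k:ℝ) * c ^ 2 / 2 + h * c - h ^ 2 / 2)
      ≤ Real.exp ((k:ℝ) * C ^ 2 / 2) * Real.exp (h * C - h ^ 2 / 2) := by
    rw [← Real.exp_add]
    apply Real.exp_le_exp.mpr
    have hc2 : c ^ 2 ≤ C ^ 2 := by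
      rw [← sq_abs]; exact pow_le_pow_left₀ (abs_nonneg c) hc 2
    have hcC : c ≤ C := (le_abs_self c).trans hc
    have : h * c ≤ h * C := mul_le_mul_of_nonneg_left hcC hh
    nlinarith [Nat.cast_nonneg (α := ℝ) k]
  calc |KK k c h| = s ^ k * (|EE (QQ k) c h| * Real.exp ((k:ℝ) * c ^ 2 / 2 + h * c - h ^ 2 / 2)) := by
        rw [KK, abs_mul, abs_mul, abs_pow, abs_of_nonneg hs0, abs_of_nonneg (Real.exp_nonneg _)]
    _ ≤ s ^ k * (EE (QQ k) C h * (Real.exp ((k:ℝ) * C ^ 2 / 2) * Real.exp (h * C - h ^ 2 / 2))) := by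
        apply mul_le_mul_of_nonneg_left _ (pow_nonneg hs0 k)
        exact mul_le_mul hEc hexp (Real.exp_nonneg _) hE0
    _ = s ^ k * Real.exp ((k:ℝ) * C ^ 2 / 2) *
          (((QQ k).eval (Polynomial.C C)).eval h * Real.exp (h * C - h ^ 2 / 2)) := by
        rw [hswap]; ring
    _ ≤ s ^ k * Real.exp ((k:ℝ) * C ^ 2 / 2) * M := by
        apply mul_le_mul_of_nonneg_left _ (by positivity)
        refine le_trans ?_ (hM h hh)
        exact mul_le_mul_of_nonneg_right (le_abs_self _) (Real.exp_nonneg _)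

section Main

variable (Pi : Measure ℝ) [IsProbabilityMeasure Pi] (hPi : Pi (Set.Iio 0) = 0)
variable (cv : ℝ → ℝ) (hcv : ∀ p ∈ Set.Ioo (0:ℝ) 1, stdNormalCdf (cv p) = 1 - p)

include hPi in
lemma ae_nonneg : ∀ᵐ h ∂Pi, 0 ≤ h := by
  have hset : {a : ℝ | ¬ (0:ℝ) ≤ a} = Set.Iio 0 := by ext a; simp [not_le]
  rw [MeasureTheory.ae_iff, hset]
  exact hPi

include hPi hcv in
lemma main_derivI (k : ℕ) {p : ℝ} (hp : p ∈ Set.Ioo (0:ℝ) 1) :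
    HasDerivAt (fun x => ∫ h, KK k (cv x) h ∂Pi) (-∫ h, KK (k+1) (cv p) h ∂Pi) p := by
  obtain ⟨hp0, hp1⟩ := hp
  have hae := ae_nonneg Pi hPi
  set ε := min p (1 - p) / 2 with hεdef
  have hmin : 0 < min p (1 - p) := lt_min hp0 (by linarith)
  have hε0 : 0 < ε := by positivity
  have hεp : ε ≤ p / 2 := by
    rw [hεdef]; have := min_le_left p (1 - p); linarith
  have hεq : ε ≤ (1 - p) / 2 := by
    rw [hεdef]; have := min_le_right p (1 - p); linarith
  have hball : ∀ x ∈ Metric.ball p ε, p - ε < x ∧ x < p + ε := by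
    intro x hx
    rw [Metric.mem_ball, Real.dist_eq, abs_lt] at hx
    constructor <;> linarith [hx.1, hx.2]
  have hball01 : ∀ x ∈ Metric.ball p ε, x ∈ Set.Ioo (0:ℝ) 1 := by
    intro x hx
    obtain ⟨h1, h2⟩ := hball x hx
    exact ⟨by linarith, by linarith⟩
  have he1 : p - ε ∈ Set.Ioo (0:ℝ) 1 := ⟨by linarith, by linarith⟩
  have he2 : p + ε ∈ Set.Ioo (0:ℝ) 1 := ⟨by linarith, by linarith⟩
  set C := max |cv (p - ε)| |cv (p + ε)| with hC
  have hC0 : 0 ≤ C := le_trans (abs_nonneg _) (le_max_left _ _)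
  have hcvb : ∀ x ∈ Metric.ball p ε, |cv x| ≤ C := by
    intro x hx
    obtain ⟨h1, h2⟩ := hball x hx
    have hx01 := hball01 x hx
    have u1 : cv x < cv (p - ε) := cv_lt cv hcv _ _ he1 hx01 h1
    have u2 : cv (p + ε) < cv x := cv_lt cv hcv _ _ hx01 he2 h2
    rw [abs_le]
    constructor
    · have : -|cv (p + ε)| ≤ cv (p + ε) := neg_abs_le _
      have h3 : |cv (p + ε)| ≤ C := le_max_right _ _
      linarith
    · have : cv (p - ε) ≤ |cv (p - ε)| := le_abs_self _
      have h3 : |cv (p - ε)| ≤ C := le_max_left _ _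
      linarith
  obtain ⟨M, hM⟩ := KK_bound (k + 1) hC0
  obtain ⟨M0, hM0⟩ := KK_bound k hC0
  have hpball : p ∈ Metric.ball p ε := Metric.mem_ball_self hε0
  have key := hasDerivAt_integral_of_dominated_loc_of_deriv_le
    (F := fun x h => KK k (cv x) h) (F' := fun x h => -KK (k+1) (cv x) h)
    (μ := Pi) (bound := fun _ => M) (x₀ := p) (Metric.ball_mem_nhds p hε0)
    (Filter.Eventually.of_forall fun x => (continuous_KK_h k (cv x)).aestronglyMeasurable)
    ?_ ((continuous_KK_h (k+1) (cv p)).neg.aestronglyMeasurable) ?_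
    (integrable_const M) ?_
  · rcases key with ⟨_, hd⟩
    rw [MeasureTheory.integral_neg] at hd
    exact hd
  · refine Integrable.mono' (integrable_const M0)
      (continuous_KK_h k (cv p)).aestronglyMeasurable ?_
    filter_upwards [hae] with h hh
    rw [Real.norm_eq_abs]
    exact hM0 (cv p) h (hcvb p hpball) hh
  · filter_upwards [hae] with h hh
    intro x hx
    rw [norm_neg, Real.norm_eq_abs]
    exact hM (cv x) h (hcvb x hx) hh
  · filter_upwards [hae] with h hh
    intro x hx
    have hder := (hasDerivAt_KK k h (cv x)).comp x (cv_hasDerivAt cv hcv (hball01 x hx))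
    have hpdf : stdNormalPdf (cv x) ≠ 0 := ne_of_gt (stdNormalPdf_pos _)
    have heq : stdNormalPdf (cv x) * KK (k+1) (cv x) h * -(stdNormalPdf (cv x))⁻¹
        = -KK (k+1) (cv x) h := by
      field_simp
    rw [heq] at hder
    exact hder

include hPi hcv in
lemma main_iter (g₁ : ℝ → ℝ)
    (hg₁ : ∀ p : ℝ, g₁ p = ∫ h, Real.exp (h * cv p - h ^ 2 / 2) ∂Pi) :
    ∀ k : ℕ, ∀ p ∈ Set.Ioo (0:ℝ) 1,
      iteratedDeriv k g₁ p = (-1:ℝ)^k * ∫ h, KK k (cv p) h ∂Pi := by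
  intro k
  induction k with
  | zero =>
    intro p hp
    rw [iteratedDeriv_zero, hg₁ p]
    simp only [pow_zero, one_mul]
    congr 1
    funext h
    rw [KK_zero]
  | succ k ih =>
    intro p hp
    rw [iteratedDeriv_succ]
    have hev : iteratedDeriv k g₁ =ᶠ[nhds p]
        fun x => (-1:ℝ)^k * ∫ h, KK k (cv x) h ∂Pi := by
      filter_upwards [isOpen_Ioo.mem_nhds hp] with x hx using ih x hx
    rw [hev.deriv_eq]
    have hd := (main_derivI Pi hPi cv hcv k hp).const_mul ((-1:ℝ)^k)
    rw [hd.deriv, pow_succ]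
    ring

end Main

/-- if Π is a probability measure on [0,∞) (modeled as a probability
measure on ℝ giving no mass to (−∞,0)), cv₁(p) = Φ⁻¹(1−p) on (0,1), and
g₁(p) = ∫ exp(h·cv₁(p) − h²/2) dΠ(h), then g₁ is completely monotone on (0, 1/2]:
for every integer k ≥ 0 and every p ∈ (0, 1/2], 0 ≤ (−1)^k g₁^{(k)}(p). -/
theorem stmt_5
    (Pi : Measure ℝ) [IsProbabilityMeasure Pi] (hPi : Pi (Set.Iio 0) = 0)
    (cv : ℝ → ℝ) (hcv : ∀ p ∈ Set.Ioo (0 : ℝ) 1, stdNormalCdf (cv p) = 1 - p)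
    (g₁ : ℝ → ℝ)
    (hg₁ : ∀ p : ℝ, g₁ p = ∫ h, Real.exp (h * cv p - h ^ 2 / 2) ∂Pi) :
    ∀ k : ℕ, ∀ p ∈ Set.Ioc (0 : ℝ) (1 / 2),
      0 ≤ (-1 : ℝ) ^ k * iteratedDeriv k g₁ p := by
  intro k p hp
  have hp' : p ∈ Set.Ioo (0:ℝ) 1 := ⟨hp.1, lt_of_le_of_lt hp.2 (by norm_num)⟩
  rw [main_iter Pi hPi cv hcv g₁ hg₁ k p hp', ← mul_assoc, ← mul_pow]
  simp only [neg_mul_neg, one_mul, one_pow]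
  have hcv0 : 0 ≤ cv p := by
    by_contra hneg
    push_neg at hneg
    have hlt := strictMono_stdNormalCdf hneg
    rw [hcv p hp', stdNormalCdf_zero] at hlt
    have := hp.2
    linarith
  refine MeasureTheory.integral_nonneg_of_ae ?_
  filter_upwards [ae_nonneg Pi hPi] with h hh
  exact KK_nonneg k hcv0 hh
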